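/- Given constants 0 < μ ≤ M, L > 0 and c > 0, one has (L·φ + 2r̲(M + r̲)) / (2(μ − r̲)²) < μ/(M + μ) + 1/2 ≤ 1. -/

import Mathlib

theorem danla_damped_phase_factor (μ M L c : ℝ) (hμ : 0 < μ) (hμM : μ ≤ M)
    (hL : 0 < L) (hc : 0 < c)
    (Mc r φ : ℝ) (hMc : Mc = M + c)
    (hr : r = (Real.sqrt (Mc ^ 2 + 3 * μ ^ 2) - Mc) / 3)
    (hφ : φ = 2 * μ * (μ - r) ^ 2 / (L * (M + μ)) - 2 * r * (μ - r) / L) :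
    (L * φ + 2 * r * (M + r)) / (2 * (μ - r) ^ 2) < μ / (M + μ) + 1 / 2 ∧
    μ / (M + μ) + 1 / 2 ≤ 1 := by
  have hMcpos : 0 < Mc := by rw [hMc]; linarith
  have hsnn := Real.sqrt_nonneg (Mc ^ 2 + 3 * μ ^ 2)
  have hs : Real.sqrt (Mc ^ 2 + 3 * μ ^ 2) ^ 2 = Mc ^ 2 + 3 * μ ^ 2 :=
    Real.sq_sqrt (by positivity)
  have hsgt : Mc < Real.sqrt (Mc ^ 2 + 3 * μ ^ 2) := by nlinarith
  have hr0 : 0 < r := by rw [hr]; linarith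
  have hkey : 3 * r ^ 2 + 2 * r * Mc = μ ^ 2 := by
    have h3 : 3 * r + Mc = Real.sqrt (Mc ^ 2 + 3 * μ ^ 2) := by rw [hr]; ring
    nlinarith [hs, h3]
  have hrμ : r < μ := by nlinarith
  have hMμ : 0 < M + μ := by linarith
  have hd : 0 < 2 * (μ - r) ^ 2 := by nlinarith
  constructor
  · rw [div_lt_iff₀ hd, hφ]
    have hLM : L * (M + μ) ≠ 0 := by positivity
    have hscalar : 2 * r * (M + 2 * r - μ) < (μ - r) ^ 2 := by nlinarith
    have hpos : 0 < 2 * (L * L) * ((M + μ) * (M + μ)) := by positivity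
    have h2 := mul_lt_mul_of_pos_left hscalar hpos
    field_simp
    nlinarith [h2, mul_lt_mul_of_pos_left hscalar hMμ]
  · rw [div_add' _ _ _ (ne_of_gt hMμ), div_le_one hMμ]
    linarith
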